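/- For every integer n ≥ 1, there exists a finite simple graph G with 6 + 2n vertices and 6 + n edges that is NOT almost regular and satisfies perfmat H ≤ perfmat G for every finite simple graph H with 6 + 2n vertices and 6 + n edges. In other words, the graphs maximizing the number of perfect matchings among graphs with 6+2n vertices and 6+n edges are not all almost regular. -/

import Mathlib

open Nat

/-- The degree of a vertex, as the cardinality of its neighbor set. -/
noncomputable def ndeg {V : Type*} (G : SimpleGraph V) (v : V) : ℕ :=
  (G.neighborSet v).ncard

/-- The number of perfect matchings of a simple graph. -/
noncomputable def perfmat {V : Type*} (G : SimpleGraph V) : ℕ :=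
  {M : G.Subgraph | M.IsPerfectMatching}.ncard

set_option linter.unusedSectionVars false
set_option linter.unusedVariables false

namespace Stmt17Aux

open SimpleGraph

variable {V : Type*}

/-- A perfect-matching function: a fixed-point-free involution moving along edges. -/
def IsPMF (H : SimpleGraph V) (f : V → V) : Prop :=
  (∀ v, f (f v) = v) ∧ ∀ v, H.Adj v (f v)

/-- The edge set of a perfect matching function. -/
def Ef (f : V → V) : Set (Sym2 V) := Set.range fun v => s(v, f v)

lemma mem_Ef_iff {f : V → V} (hf : ∀ v, f (f v) = v) {x y : V} :
    s(x, y) ∈ Ef f ↔ f x = y := by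
  constructor
  · rintro ⟨v, hv⟩
    rw [Sym2.eq_iff] at hv
    rcases hv with ⟨rfl, rfl⟩ | ⟨rfl, rfl⟩
    · rfl
    · exact hf _
  · rintro rfl
    exact ⟨x, rfl⟩

lemma self_mem_Ef (f : V → V) (v : V) : s(v, f v) ∈ Ef f := ⟨v, rfl⟩

lemma Ef_subset_edgeSet {H : SimpleGraph V} {f : V → V} (hf : IsPMF H f) :
    Ef f ⊆ H.edgeSet := by
  rintro e ⟨v, rfl⟩
  exact (hf.2 v)

lemma IsPMF.ne {H : SimpleGraph V} {f : V → V} (hf : IsPMF H f) (v : V) : f v ≠ v :=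
  (hf.2 v).ne'

lemma ncard_Ef [Fintype V] [DecidableEq V] {H : SimpleGraph V} {f : V → V} (hf : IsPMF H f) :
    2 * (Ef f).ncard = Fintype.card V := by
  classical
  have hco : Ef f = ↑(Finset.image (fun v => s(v, f v)) Finset.univ) := by
    ext e
    simp [Ef]
  rw [hco, Set.ncard_coe_finset]
  have hcard := Finset.card_eq_sum_card_fiberwise
    (f := fun v => s(v, f v)) (s := Finset.univ)
    (t := Finset.image (fun v => s(v, f v)) Finset.univ)
    (fun x _ => Finset.mem_image_of_mem _ (Finset.mem_univ x))
  have hfib : ∀ e ∈ Finset.image (fun v => s(v, f v)) Finset.univ,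
      (Finset.univ.filter fun v => s(v, f v) = e).card = 2 := by
    intro e he
    obtain ⟨a, -, rfl⟩ := Finset.mem_image.mp he
    have : (Finset.univ.filter fun v => s(v, f v) = s(a, f a)) = {a, f a} := by
      ext v
      simp only [Finset.mem_filter, Finset.mem_univ, true_and, Finset.mem_insert,
        Finset.mem_singleton, Sym2.eq_iff]
      constructor
      · rintro (⟨rfl, -⟩ | ⟨rfl, -⟩)
        · exact Or.inl rfl
        · exact Or.inr rfl
      · rintro (rfl | rfl)
        · exact Or.inl ⟨rfl, rfl⟩
        · exact Or.inr ⟨rfl, hf.1 a⟩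
    rw [this, Finset.card_insert_of_notMem (by simpa using (hf.ne a).symm),
      Finset.card_singleton]
  rw [Finset.sum_congr rfl hfib, Finset.sum_const, smul_eq_mul] at hcard
  rw [← Finset.card_univ, hcard, mul_comm]

lemma mem_diff_Ef_iff {f g : V → V} (hf : ∀ v, f (f v) = v) (hg : ∀ v, g (g v) = v)
    {x y : V} : s(x, y) ∈ Ef g \ Ef f ↔ g x = y ∧ f x ≠ y := by
  simp [Set.mem_diff, mem_Ef_iff hf, mem_Ef_iff hg]

lemma two_le_ncard_diff [Fintype V] [DecidableEq V] {H : SimpleGraph V} {f g : V → V}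
    (hf : IsPMF H f) (hg : IsPMF H g)
    (hne : f ≠ g) : 2 ≤ (Ef g \ Ef f).ncard := by
  classical
  obtain ⟨a, ha⟩ := Function.ne_iff.mp hne
  have h1 : s(a, g a) ∈ Ef g \ Ef f :=
    (mem_diff_Ef_iff hf.1 hg.1).mpr ⟨rfl, ha⟩
  have hfa : g (f a) ≠ f (f a) := by
    intro h
    rw [hf.1 a] at h
    have : g a = f a := by
      conv_lhs => rw [← h]
      exact hg.1 _
    exact ha this.symm
  have h2 : s(f a, g (f a)) ∈ Ef g \ Ef f :=
    (mem_diff_Ef_iff hf.1 hg.1).mpr ⟨rfl, fun hc => hfa hc.symm⟩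
  have hne12 : s(a, g a) ≠ s(f a, g (f a)) := by
    intro h
    rw [Sym2.eq_iff] at h
    rcases h with ⟨h3, -⟩ | ⟨h3, h4⟩
    · exact hf.ne a h3.symm
    · exact ha h4.symm
  exact (Set.one_lt_ncard_iff (Set.toFinite _)).mpr ⟨_, _, h1, h2, hne12⟩



lemma four_in_le_three {α : Type*} {S : Set α} (hS : S.Finite) {e1 e2 e3 e4 : α}
    (m1 : e1 ∈ S) (m2 : e2 ∈ S) (m3 : e3 ∈ S) (m4 : e4 ∈ S)
    (h12 : e1 ≠ e2) (h13 : e1 ≠ e3) (h14 : e1 ≠ e4)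
    (h23 : e2 ≠ e3) (h24 : e2 ≠ e4) (h34 : e3 ≠ e4)
    (hle : S.ncard ≤ 3) : False := by
  have hsub : ({e1, e2, e3, e4} : Set α) ⊆ S := by
    intro x hx
    simp only [Set.mem_insert_iff, Set.mem_singleton_iff] at hx
    rcases hx with rfl | rfl | rfl | rfl <;> assumption
  have hfin3 : ({e3, e4} : Set α).Finite := (Set.finite_singleton e4).insert e3
  have hfin2 : ({e2, e3, e4} : Set α).Finite := hfin3.insert e2
  have h4 : ({e1, e2, e3, e4} : Set α).ncard = 4 := by
    rw [Set.ncard_insert_of_notMem (by simp [h12, h13, h14]) hfin2,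
      Set.ncard_insert_of_notMem (by simp [h23, h24]) hfin3,
      Set.ncard_pair h34]
  have := Set.ncard_le_ncard hsub hS
  omega

variable [Fintype V] [DecidableEq V]

lemma config_contra {H : SimpleGraph V} {f1 f2 f3 : V → V}
    (h1 : IsPMF H f1) (h2 : IsPMF H f2) (h3 : IsPMF H f3)
    {a b c d : V} (hab : f1 a = b) (hac : f2 a = c) (hbd : f2 b = d)
    (hcd : f1 c = d) (hbc : b ≠ c)
    (h3ac : f3 a = c) (h3bd : f3 b ≠ d)
    (hAB : ((Ef f2 \ Ef f1) ∪ (Ef f3 \ Ef f1)).ncard ≤ 3) : False := by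
  have hba : b ≠ a := hab ▸ h1.ne a
  have hca : c ≠ a := hac ▸ h2.ne a
  have hdb : d ≠ b := hbd ▸ h2.ne b
  have h2c : f2 c = a := by rw [← hac, h2.1]
  have h2d : f2 d = b := by rw [← hbd, h2.1]
  have h1b : f1 b = a := by rw [← hab, h1.1]
  have h1d : f1 d = c := by rw [← hcd, h1.1]
  have hdc : d ≠ c := hcd ▸ h1.ne c
  have hda : d ≠ a := by
    intro h
    rw [← h2d, h, hac] at hbc
    exact hbc rfl
  have h3c : f3 c = a := by rw [← h3ac, h3.1]
  have h3bne : f3 b ≠ a := by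
    intro h
    have : f3 a = b := by rw [← h, h3.1]
    rw [this] at h3ac
    exact hbc h3ac
  have h3dne : f3 d ≠ c := by
    intro h
    have : f3 c = d := by rw [← h, h3.1]
    rw [h3c] at this
    exact hda this.symm
  have mac : s(a, c) ∈ Ef f2 \ Ef f1 :=
    (mem_diff_Ef_iff h1.1 h2.1).mpr ⟨hac, fun h => hbc (hab ▸ h)⟩
  have mbd : s(b, d) ∈ Ef f2 \ Ef f1 :=
    (mem_diff_Ef_iff h1.1 h2.1).mpr ⟨hbd, fun h => hda ((h1b ▸ h).symm)⟩
  have mb3 : s(b, f3 b) ∈ Ef f3 \ Ef f1 :=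
    (mem_diff_Ef_iff h1.1 h3.1).mpr ⟨rfl, fun h => h3bne ((h1b ▸ h).symm)⟩
  have md3 : s(d, f3 d) ∈ Ef f3 \ Ef f1 :=
    (mem_diff_Ef_iff h1.1 h3.1).mpr ⟨rfl, fun h => h3dne ((h1d ▸ h).symm)⟩
  refine four_in_le_three (Set.toFinite _)
    (Set.mem_union_left _ mac) (Set.mem_union_left _ mbd)
    (Set.mem_union_right _ mb3) (Set.mem_union_right _ md3)
    ?_ ?_ ?_ ?_ ?_ ?_ hAB
  · intro h; rw [Sym2.eq_iff] at h
    rcases h with ⟨h, -⟩ | ⟨-, h⟩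
    · exact hba h.symm
    · exact hbc h.symm
  · intro h; rw [Sym2.eq_iff] at h
    rcases h with ⟨h, -⟩ | ⟨-, h⟩
    · exact hba h.symm
    · exact hbc h.symm
  · intro h; rw [Sym2.eq_iff] at h
    rcases h with ⟨h, -⟩ | ⟨-, h⟩
    · exact hda h.symm
    · exact hdc h.symm
  · intro h; rw [Sym2.eq_iff] at h
    rcases h with ⟨-, h⟩ | ⟨h, -⟩
    · exact h3bd h.symm
    · exact h3.ne b h.symm
  · intro h; rw [Sym2.eq_iff] at h
    rcases h with ⟨h, -⟩ | ⟨h, -⟩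
    · exact hdb h.symm
    · exact h3bd (by rw [h]; exact h3.1 d)
  · intro h; rw [Sym2.eq_iff] at h
    rcases h with ⟨h, -⟩ | ⟨-, h'⟩
    · exact hdb h.symm
    · exact h3bd h'



set_option linter.unusedSectionVars false

lemma case1 {H : SimpleGraph V} {f1 f2 f3 : V → V}
    (h1 : IsPMF H f1) (h2 : IsPMF H f2) (h3 : IsPMF H f3)
    (h12 : f1 ≠ f2) (h13 : f1 ≠ f3) (h23 : f2 ≠ f3)
    (hAB : ((Ef f2 \ Ef f1) ∪ (Ef f3 \ Ef f1)).ncard ≤ 3)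
    (hA : (Ef f2 \ Ef f1).ncard = 2) : False := by
  obtain ⟨a, ha⟩ := Function.ne_iff.mp h12
  set b := f1 a with hb
  set c := f2 a with hc
  set d := f2 b with hd
  have hab : f1 a = b := rfl
  have hac : f2 a = c := rfl
  have hbd : f2 b = d := rfl
  have hbc : b ≠ c := ha
  have hba : b ≠ a := h1.ne a
  have hca : c ≠ a := h2.ne a
  have hdb : d ≠ b := h2.ne b
  have h1b : f1 b = a := h1.1 a
  have h2c : f2 c = a := h2.1 a
  have h2d : f2 d = b := h2.1 b
  have hda : d ≠ a := by
    intro h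
    rw [← h2d, h, hac] at hbc
    exact hbc rfl
  have hdc : d ≠ c := by
    intro h
    have := h2d
    rw [h, h2c] at this
    exact hba this.symm
  -- the two edges of the difference
  have mac : s(a, c) ∈ Ef f2 \ Ef f1 :=
    (mem_diff_Ef_iff h1.1 h2.1).mpr ⟨hac, ha⟩
  have mbd : s(b, d) ∈ Ef f2 \ Ef f1 :=
    (mem_diff_Ef_iff h1.1 h2.1).mpr ⟨hbd, fun h => hda (h1b ▸ h).symm⟩
  have hedges : s(a, c) ≠ s(b, d) := by
    intro h; rw [Sym2.eq_iff] at h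
    rcases h with ⟨h, -⟩ | ⟨h, -⟩
    · exact hba h.symm
    · exact hda h.symm
  have hpair : ({s(a, c), s(b, d)} : Set (Sym2 V)) = Ef f2 \ Ef f1 := by
    apply Set.eq_of_subset_of_ncard_le _ _ (Set.toFinite _)
    · intro x hx
      simp only [Set.mem_insert_iff, Set.mem_singleton_iff] at hx
      rcases hx with rfl | rfl
      · exact mac
      · exact mbd
    · rw [hA, Set.ncard_pair hedges]
  have charS12 : ∀ v, f1 v ≠ f2 v → v = a ∨ v = b ∨ v = c ∨ v = d := by
    intro v hv
    have hm : s(v, f2 v) ∈ Ef f2 \ Ef f1 :=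
      (mem_diff_Ef_iff h1.1 h2.1).mpr ⟨rfl, hv⟩
    rw [← hpair] at hm
    simp only [Set.mem_insert_iff, Set.mem_singleton_iff, Sym2.eq_iff] at hm
    rcases hm with (⟨h, -⟩ | ⟨h, -⟩) | (⟨h, -⟩ | ⟨h, -⟩)
    · exact Or.inl h
    · exact Or.inr (Or.inr (Or.inl h))
    · exact Or.inr (Or.inl h)
    · exact Or.inr (Or.inr (Or.inr h))
  have h1c : f1 c = d := by
    have e1 : f1 (f1 c) = c := h1.1 c
    have hne1 : f1 (f1 c) ≠ f2 (f1 c) := by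
      intro h
      rw [e1] at h
      have h' : f2 c = f1 c := by
        conv_lhs => rw [h]
        exact h2.1 _
      rw [h2c] at h'
      have h'' : b = c := by
        rw [hb, h', h1.1]
      exact hbc h''
    rcases charS12 _ hne1 with h | h | h | h
    · have h' : c = b := by rw [← e1, h, hab]
      exact (hbc h'.symm).elim
    · have h' : c = a := by rw [← e1, h, h1b]
      exact (hca h').elim
    · exact (h1.ne c h).elim
    · exact h
  have h1d : f1 d = c := by rw [← h1c, h1.1]
  by_cases h3a : f3 a = c
  · by_cases h3b : f3 b = d
    · -- either f3 = f2, or there is an extra vertex giving 4 edges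
      by_cases hu : ∃ u, f1 u ≠ f3 u ∧ u ≠ a ∧ u ≠ b ∧ u ≠ c ∧ u ≠ d
      · obtain ⟨u, huS, hua, hub, huc, hud⟩ := hu
        have hu'S : f1 (f1 u) ≠ f3 (f1 u) := by
          intro h
          rw [h1.1] at h
          have h' : f3 u = f1 u := by
            conv_lhs => rw [h]
            exact h3.1 _
          exact huS h'.symm
        have hu'a : f1 u ≠ a := fun h => hub (by rw [← hab, ← h, h1.1])
        have hu'b : f1 u ≠ b := fun h => hua (by rw [← h1b, ← h, h1.1])
        have hu'c : f1 u ≠ c := fun h => hud (by rw [← h1c, ← h, h1.1])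
        have hu'd : f1 u ≠ d := fun h => huc (by rw [← h1d, ← h, h1.1])
        have mu : s(u, f3 u) ∈ Ef f3 \ Ef f1 :=
          (mem_diff_Ef_iff h1.1 h3.1).mpr ⟨rfl, fun h => huS h⟩
        have mu' : s(f1 u, f3 (f1 u)) ∈ Ef f3 \ Ef f1 :=
          (mem_diff_Ef_iff h1.1 h3.1).mpr ⟨rfl, fun h => hu'S h⟩
        refine four_in_le_three (Set.toFinite _)
          (Set.mem_union_left _ mac) (Set.mem_union_left _ mbd)
          (Set.mem_union_right _ mu) (Set.mem_union_right _ mu')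
          hedges ?_ ?_ ?_ ?_ ?_ hAB
        · intro h; rw [Sym2.eq_iff] at h
          rcases h with ⟨h, -⟩ | ⟨-, h⟩
          · exact hua h.symm
          · exact huc h.symm
        · intro h; rw [Sym2.eq_iff] at h
          rcases h with ⟨h, -⟩ | ⟨-, h⟩
          · exact hu'a h.symm
          · exact hu'c h.symm
        · intro h; rw [Sym2.eq_iff] at h
          rcases h with ⟨h, -⟩ | ⟨-, h⟩
          · exact hub h.symm
          · exact hud h.symm
        · intro h; rw [Sym2.eq_iff] at h
          rcases h with ⟨h, -⟩ | ⟨-, h⟩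
          · exact hu'b h.symm
          · exact hu'd h.symm
        · intro h; rw [Sym2.eq_iff] at h
          rcases h with ⟨h, -⟩ | ⟨-, h'⟩
          · exact h1.ne u h.symm
          · exact huS h'.symm
      · -- f3 = f2 everywhere
        apply h23
        funext v
        by_cases hv : v = a ∨ v = b ∨ v = c ∨ v = d
        · rcases hv with rfl | rfl | rfl | rfl
          · rw [hac, h3a]
          · rw [hbd, h3b]
          · rw [h2c, ← h3a, h3.1]
          · rw [h2d, ← h3b, h3.1]
        · push_neg at hv
          obtain ⟨hva, hvb, hvc, hvd⟩ := hv
          have hv13 : f1 v = f3 v := by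
            by_contra hcon
            exact hu ⟨v, hcon, hva, hvb, hvc, hvd⟩
          have hv12 : f1 v = f2 v := by
            by_contra hcon
            rcases charS12 v hcon with h | h | h | h
            · exact hva h
            · exact hvb h
            · exact hvc h
            · exact hvd h
          rw [← hv12, hv13]
    · -- configuration contradiction with (a, b, c, d)
      exact config_contra h1 h2 h3 hab hac hbd h1c hbc h3a h3b hAB
  · by_cases h3b : f3 b = d
    · -- relabeled configuration (b, a, d, c)
      exact config_contra h1 h2 h3 h1b hbd hac h1d
        (fun h => hda h.symm) h3b h3a hAB
    · -- disjoint: 2 + 2 ≤ 3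
      have hdisj : Disjoint (Ef f2 \ Ef f1) (Ef f3 \ Ef f1) := by
        rw [Set.disjoint_left]
        intro e heA heB
        rw [← hpair] at heA
        have heB' : e ∈ Ef f3 := heB.1
        simp only [Set.mem_insert_iff, Set.mem_singleton_iff] at heA
        rcases heA with rfl | rfl
        · exact h3a ((mem_Ef_iff h3.1).mp heB')
        · exact h3b ((mem_Ef_iff h3.1).mp heB')
      have hB2 := two_le_ncard_diff h1 h3 h13
      rw [Set.ncard_union_eq hdisj (Set.toFinite _) (Set.toFinite _), hA] at hAB
      omega



lemma no_three {n : ℕ} {H : SimpleGraph V} (hV : Fintype.card V = 6 + 2 * n)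
    (hE : H.edgeSet.ncard = 6 + n) {f1 f2 f3 : V → V}
    (h1 : IsPMF H f1) (h2 : IsPMF H f2) (h3 : IsPMF H f3)
    (h12 : f1 ≠ f2) (h13 : f1 ≠ f3) (h23 : f2 ≠ f3) : False := by
  have hc1 := ncard_Ef h1
  rw [hV] at hc1
  have hE1 : (Ef f1).ncard = 3 + n := by omega
  have hsub : Ef f1 ∪ ((Ef f2 \ Ef f1) ∪ (Ef f3 \ Ef f1)) ⊆ H.edgeSet := by
    apply Set.union_subset (Ef_subset_edgeSet h1)
    apply Set.union_subset
    · exact (Set.diff_subset).trans (Ef_subset_edgeSet h2)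
    · exact (Set.diff_subset).trans (Ef_subset_edgeSet h3)
  have hdisj : Disjoint (Ef f1) ((Ef f2 \ Ef f1) ∪ (Ef f3 \ Ef f1)) := by
    rw [Set.disjoint_union_right]
    exact ⟨Set.disjoint_sdiff_right, Set.disjoint_sdiff_right⟩
  have hle := Set.ncard_le_ncard hsub (Set.toFinite _)
  rw [Set.ncard_union_eq hdisj (Set.toFinite _) (Set.toFinite _), hE1, hE] at hle
  have hAB : ((Ef f2 \ Ef f1) ∪ (Ef f3 \ Ef f1)).ncard ≤ 3 := by omega
  have hA2 := two_le_ncard_diff h1 h2 h12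
  have hB2 := two_le_ncard_diff h1 h3 h13
  have hAle : (Ef f2 \ Ef f1).ncard ≤ 3 :=
    le_trans (Set.ncard_le_ncard Set.subset_union_left (Set.toFinite _)) hAB
  have hBle : (Ef f3 \ Ef f1).ncard ≤ 3 :=
    le_trans (Set.ncard_le_ncard Set.subset_union_right (Set.toFinite _)) hAB
  by_cases hA : (Ef f2 \ Ef f1).ncard = 2
  · exact case1 h1 h2 h3 h12 h13 h23 hAB hA
  by_cases hB : (Ef f3 \ Ef f1).ncard = 2
  · refine case1 h1 h3 h2 h13 h12 (Ne.symm h23) ?_ hB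
    rwa [Set.union_comm] at hAB
  -- both have 3 elements
  have hA3 : (Ef f2 \ Ef f1).ncard = 3 := by omega
  have hB3 : (Ef f3 \ Ef f1).ncard = 3 := by omega
  have hAeq : Ef f2 \ Ef f1 = (Ef f2 \ Ef f1) ∪ (Ef f3 \ Ef f1) := by
    apply Set.eq_of_subset_of_ncard_le Set.subset_union_left _ (Set.toFinite _)
    omega
  have hBeq : Ef f3 \ Ef f1 = (Ef f2 \ Ef f1) ∪ (Ef f3 \ Ef f1) := by
    apply Set.eq_of_subset_of_ncard_le Set.subset_union_right _ (Set.toFinite _)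
    omega
  have hABeq : Ef f2 \ Ef f1 = Ef f3 \ Ef f1 := hAeq.trans hBeq.symm
  obtain ⟨v, hv⟩ := Function.ne_iff.mp h23
  by_cases h13v : f1 v = f3 v
  · have hv12 : f1 v ≠ f2 v := fun h => hv (by rw [← h, h13v])
    have hm : s(v, f2 v) ∈ Ef f2 \ Ef f1 :=
      (mem_diff_Ef_iff h1.1 h2.1).mpr ⟨rfl, hv12⟩
    rw [hABeq] at hm
    exact hv (((mem_Ef_iff h3.1).mp hm.1).symm)
  · have hm : s(v, f3 v) ∈ Ef f3 \ Ef f1 :=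
      (mem_diff_Ef_iff h1.1 h3.1).mpr ⟨rfl, h13v⟩
    rw [← hABeq] at hm
    exact hv ((mem_Ef_iff h2.1).mp hm.1)



instance subgraphFinite {W : Type*} [Finite W] (H : SimpleGraph W) : Finite H.Subgraph := by
  have : Finite (Set W × (W → W → Prop)) := by infer_instance
  exact Finite.of_injective (fun M => (M.verts, M.Adj))
    (fun M M' h => SimpleGraph.Subgraph.ext (congrArg Prod.fst h) (congrArg Prod.snd h))

section PMF

variable {H : SimpleGraph V} {M : H.Subgraph}

/-- The partner function of a perfect matching. -/
noncomputable def pmf (hM : M.IsPerfectMatching) : V → V :=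
  fun v => (hM.1 (hM.2 v)).choose

lemma pmf_adj (hM : M.IsPerfectMatching) (v : V) : M.Adj v (pmf hM v) :=
  (hM.1 (hM.2 v)).choose_spec.1

lemma pmf_eq (hM : M.IsPerfectMatching) {v w : V} (h : M.Adj v w) : pmf hM v = w :=
  ((hM.1 (hM.2 v)).choose_spec.2 w h).symm

lemma pmf_isPMF (hM : M.IsPerfectMatching) : IsPMF H (pmf hM) :=
  ⟨fun v => pmf_eq hM (M.symm.symm _ _ (pmf_adj hM v)), fun v => M.adj_sub (pmf_adj hM v)⟩

lemma adj_iff_pmf (hM : M.IsPerfectMatching) {v w : V} : M.Adj v w ↔ pmf hM v = w :=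
  ⟨pmf_eq hM, fun h => h ▸ pmf_adj hM v⟩

lemma eq_of_pmf_eq {M' : H.Subgraph} (hM : M.IsPerfectMatching) (hM' : M'.IsPerfectMatching)
    (h : pmf hM = pmf hM') : M = M' := by
  apply SimpleGraph.Subgraph.ext
  · rw [hM.2.verts_eq_univ, hM'.2.verts_eq_univ]
  · ext v w
    rw [adj_iff_pmf hM, adj_iff_pmf hM', h]

end PMF

lemma perfmat_le_two {n : ℕ} (hV : Fintype.card V = 6 + 2 * n) (H : SimpleGraph V)
    (hE : H.edgeSet.ncard = 6 + n) : perfmat H ≤ 2 := by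
  by_contra hcon
  push_neg at hcon
  obtain ⟨M1, M2, M3, hM1, hM2, hM3, h12, h13, h23⟩ :=
    (Set.two_lt_ncard_iff (Set.toFinite _)).mp hcon
  simp only [Set.mem_setOf_eq] at hM1 hM2 hM3
  refine no_three hV hE (pmf_isPMF hM1) (pmf_isPMF hM2) (pmf_isPMF hM3) ?_ ?_ ?_
  · exact fun h => h12 (eq_of_pmf_eq hM1 hM2 h)
  · exact fun h => h13 (eq_of_pmf_eq hM1 hM3 h)
  · exact fun h => h23 (eq_of_pmf_eq hM2 hM3 h)



section ToSub

variable {H : SimpleGraph V}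

/-- The perfect matching subgraph associated to a matching function. -/
def toSub (H : SimpleGraph V) (f : V → V) (hf : IsPMF H f) : H.Subgraph where
  verts := Set.univ
  Adj v w := f v = w
  adj_sub h := h ▸ hf.2 _
  edge_vert _ := Set.mem_univ _
  symm := ⟨fun v w h => by
    rw [← h, hf.1]⟩

lemma toSub_adj {f : V → V} (hf : IsPMF H f) {v w : V} :
    (toSub H f hf).Adj v w ↔ f v = w := Iff.rfl

lemma toSub_isPM (f : V → V) (hf : IsPMF H f) : (toSub H f hf).IsPerfectMatching :=
  ⟨fun v _ => ⟨f v, rfl, fun y hy => ((toSub_adj hf).mp hy).symm⟩, fun v => Set.mem_univ v⟩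

lemma toSub_ne {f g : V → V} (hf : IsPMF H f) (hg : IsPMF H g) (hne : f ≠ g) :
    toSub H f hf ≠ toSub H g hg := by
  intro h
  apply hne
  funext v
  have hadj : (toSub H f hf).Adj v (f v) := (toSub_adj hf).mpr rfl
  rw [h] at hadj
  exact ((toSub_adj hg).mp hadj).symm

end ToSub

section Construction

def ga (k : ℕ) : ℕ :=
  if k = 0 then 2 else if k = 1 then 3 else if k = 2 then 0 else if k = 3 then 1
  else if k % 2 = 0 then k + 1 else k - 1

def gb (k : ℕ) : ℕ :=
  if k = 0 then 3 else if k = 1 then 2 else if k = 2 then 1 else if k = 3 then 0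
  else if k % 2 = 0 then k + 1 else k - 1

variable {n : ℕ}

lemma ga_lt {k : ℕ} (h : k < 6 + 2 * n) : ga k < 6 + 2 * n := by
  unfold ga; split_ifs <;> omega

lemma gb_lt {k : ℕ} (h : k < 6 + 2 * n) : gb k < 6 + 2 * n := by
  unfold gb; split_ifs <;> omega

lemma ga_ne (k : ℕ) : ga k ≠ k := by unfold ga; split_ifs <;> omega

lemma gb_ne (k : ℕ) : gb k ≠ k := by unfold gb; split_ifs <;> omega

lemma ga_hi {k : ℕ} (h : 4 ≤ k) (h2 : k % 2 = 0) : ga k = k + 1 := by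
  unfold ga; split_ifs <;> omega

lemma ga_hi' {k : ℕ} (h : 4 ≤ k) (h2 : k % 2 = 1) : ga k = k - 1 := by
  unfold ga; split_ifs <;> omega

lemma gb_hi {k : ℕ} (h : 4 ≤ k) (h2 : k % 2 = 0) : gb k = k + 1 := by
  unfold gb; split_ifs <;> omega

lemma gb_hi' {k : ℕ} (h : 4 ≤ k) (h2 : k % 2 = 1) : gb k = k - 1 := by
  unfold gb; split_ifs <;> omega

lemma ga_invol (k : ℕ) : ga (ga k) = k := by
  rcases Nat.lt_or_ge k 4 with h | h
  · interval_cases k <;> decide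
  · rcases Nat.mod_two_eq_zero_or_one k with h2 | h2
    · rw [ga_hi h h2, ga_hi' (by omega) (by omega)]
      omega
    · rw [ga_hi' (by omega) h2, ga_hi (by omega) (by omega)]
      omega

lemma gb_invol (k : ℕ) : gb (gb k) = k := by
  rcases Nat.lt_or_ge k 4 with h | h
  · interval_cases k <;> decide
  · rcases Nat.mod_two_eq_zero_or_one k with h2 | h2
    · rw [gb_hi h h2, gb_hi' (by omega) (by omega)]
      omega
    · rw [gb_hi' (by omega) h2, gb_hi (by omega) (by omega)]
      omega

lemma ga_eq_gb {k : ℕ} (h : 4 ≤ k) : ga k = gb k := by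
  unfold ga gb; split_ifs <;> omega

variable (n) in
/-- Named vertices of `Fin (6 + 2*n)`. -/
def vt (k : ℕ) (h : k < 6 + 2 * n := by omega) : Fin (6 + 2 * n) := ⟨k, h⟩

variable (n) in
def fa : Fin (6 + 2 * n) → Fin (6 + 2 * n) := fun v => ⟨ga v.val, ga_lt v.isLt⟩

variable (n) in
def fb : Fin (6 + 2 * n) → Fin (6 + 2 * n) := fun v => ⟨gb v.val, gb_lt v.isLt⟩

variable (n) in
/-- The edge set of the extremal graph. -/
def ES : Set (Sym2 (Fin (6 + 2 * n))) :=
  insert s(vt n 0, vt n 1) (Ef (fa n) ∪ Ef (fb n))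

variable (n) in
/-- The extremal graph: `K₄` minus an edge, plus a perfect matching on the rest,
with the extra edge `s(0,1)`. -/
def Gr : SimpleGraph (Fin (6 + 2 * n)) := SimpleGraph.fromEdgeSet (ES n)

lemma gr_adj {v w : Fin (6 + 2 * n)} : (Gr n).Adj v w ↔ s(v, w) ∈ ES n ∧ v ≠ w := by
  unfold Gr
  exact SimpleGraph.fromEdgeSet_adj _

lemma fa_isPMF : IsPMF (Gr n) (fa n) := by
  constructor
  · intro v
    apply Fin.ext
    exact ga_invol v.val
  · intro v
    rw [gr_adj]
    constructor
    · exact Set.mem_insert_of_mem _ (Set.mem_union_left _ (self_mem_Ef _ v))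
    · intro h
      exact ga_ne v.val (congrArg Fin.val h).symm

lemma fb_isPMF : IsPMF (Gr n) (fb n) := by
  constructor
  · intro v
    apply Fin.ext
    exact gb_invol v.val
  · intro v
    rw [gr_adj]
    constructor
    · exact Set.mem_insert_of_mem _ (Set.mem_union_right _ (self_mem_Ef _ v))
    · intro h
      exact gb_ne v.val (congrArg Fin.val h).symm

lemma fa_ne_fb : fa n ≠ fb n := by
  intro h
  have := congrArg (fun f => (f (vt n 0)).val) h
  simp only [fa, fb, vt] at this
  norm_num [ga, gb] at this

lemma gr_edgeSet : (Gr n).edgeSet = ES n := by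
  unfold Gr
  rw [SimpleGraph.edgeSet_fromEdgeSet]
  apply sdiff_eq_self_iff_disjoint.mpr
  rw [Set.disjoint_left]
  rintro e hdiag hmem
  simp only [Sym2.mem_diagSet] at hdiag
  rcases hmem with h | h | h
  · rw [h, Sym2.mk_isDiag_iff] at hdiag
    exact absurd (congrArg Fin.val hdiag) (by norm_num [vt])
  · obtain ⟨v, rfl⟩ := h
    rw [Sym2.mk_isDiag_iff] at hdiag
    exact ga_ne v.val (congrArg Fin.val hdiag).symm
  · obtain ⟨v, rfl⟩ := h
    rw [Sym2.mk_isDiag_iff] at hdiag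
    exact gb_ne v.val (congrArg Fin.val hdiag).symm

end Construction



section Count

variable {n : ℕ}

lemma fa_val {v : Fin (6 + 2 * n)} : (fa n v).val = ga v.val := rfl
lemma fb_val {v : Fin (6 + 2 * n)} : (fb n v).val = gb v.val := rfl
lemma vt_val {k : ℕ} {h : k < 6 + 2 * n} : (vt n k h).val = k := rfl

lemma fa_vt {k m : ℕ} {hk : k < 6 + 2 * n} {hm : m < 6 + 2 * n} (h : ga k = m) :
    fa n (vt n k hk) = vt n m hm :=
  Fin.ext (by rw [fa_val, vt_val, vt_val, h])

lemma fb_vt {k m : ℕ} {hk : k < 6 + 2 * n} {hm : m < 6 + 2 * n} (h : gb k = m) :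
    fb n (vt n k hk) = vt n m hm :=
  Fin.ext (by rw [fb_val, vt_val, vt_val, h])

lemma fa0 : fa n (vt n 0) = vt n 2 := fa_vt (by decide)
lemma fa1 : fa n (vt n 1) = vt n 3 := fa_vt (by decide)
lemma fa2 : fa n (vt n 2) = vt n 0 := fa_vt (by decide)
lemma fa3 : fa n (vt n 3) = vt n 1 := fa_vt (by decide)
lemma fa4 : fa n (vt n 4) = vt n 5 := fa_vt (by decide)
lemma fb0 : fb n (vt n 0) = vt n 3 := fb_vt (by decide)
lemma fb1 : fb n (vt n 1) = vt n 2 := fb_vt (by decide)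
lemma fb2 : fb n (vt n 2) = vt n 1 := fb_vt (by decide)
lemma fb3 : fb n (vt n 3) = vt n 0 := fb_vt (by decide)
lemma fb4 : fb n (vt n 4) = vt n 5 := fb_vt (by decide)

lemma vt_ne {j k : ℕ} {hj : j < 6 + 2 * n} {hk : k < 6 + 2 * n} (h : j ≠ k) :
    vt n j hj ≠ vt n k hk := fun hc => h (congrArg Fin.val hc)

lemma diff_ab : Ef (fb n) \ Ef (fa n) = {s(vt n 0, vt n 3), s(vt n 1, vt n 2)} := by
  ext e
  constructor
  · rintro ⟨⟨v, rfl⟩, hnot⟩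
    dsimp only at hnot ⊢
    have hv4 : v.val < 4 := by
      by_contra hge
      apply hnot
      have hfab : fa n v = fb n v := Fin.ext (ga_eq_gb (by omega))
      rw [← hfab]
      exact self_mem_Ef (fa n) v
    rcases (by omega : v.val = 0 ∨ v.val = 1 ∨ v.val = 2 ∨ v.val = 3) with h | h | h | h
    · have hv : v = vt n 0 := Fin.ext h
      rw [hv, fb0]
      exact Set.mem_insert _ _
    · have hv : v = vt n 1 := Fin.ext h
      rw [hv, fb1]
      exact Set.mem_insert_of_mem _ rfl
    · have hv : v = vt n 2 := Fin.ext h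
      rw [hv, fb2]
      exact Set.mem_insert_of_mem _ (by rw [Set.mem_singleton_iff]; exact Sym2.eq_swap)
    · have hv : v = vt n 3 := Fin.ext h
      rw [hv, fb3]
      exact Set.mem_insert_iff.mpr (Or.inl Sym2.eq_swap)
  · intro h
    rcases h with h | h
    · rw [h]
      refine (mem_diff_Ef_iff fa_isPMF.1 fb_isPMF.1).mpr ⟨fb0, ?_⟩
      rw [fa0]
      exact vt_ne (by omega)
    · rw [Set.mem_singleton_iff] at h
      rw [h]
      refine (mem_diff_Ef_iff fa_isPMF.1 fb_isPMF.1).mpr ⟨fb1, ?_⟩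
      rw [fa1]
      exact vt_ne (by omega)

lemma ncard_Ef_fa : (Ef (fa n)).ncard = 3 + n := by
  have h := ncard_Ef (fa_isPMF (n := n))
  rw [Fintype.card_fin] at h
  omega

lemma e01_notmem : s(vt n 0, vt n 1) ∉ Ef (fa n) ∪ Ef (fb n) := by
  rintro (h | h)
  · have := (mem_Ef_iff (fa_isPMF (n := n)).1).mp h
    rw [fa0] at this
    exact vt_ne (by omega) this
  · have := (mem_Ef_iff (fb_isPMF (n := n)).1).mp h
    rw [fb0] at this
    exact vt_ne (by omega) this

lemma gr_ncard : (Gr n).edgeSet.ncard = 6 + n := by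
  rw [gr_edgeSet]
  unfold ES
  rw [Set.ncard_insert_of_notMem e01_notmem (Set.toFinite _)]
  have hU : Ef (fa n) ∪ Ef (fb n) = Ef (fa n) ∪ (Ef (fb n) \ Ef (fa n)) :=
    (Set.union_diff_self).symm
  have hne : s(vt n 0, vt n 3) ≠ s(vt n 1, vt n 2) := by
    intro h
    rw [Sym2.eq_iff] at h
    rcases h with ⟨h, -⟩ | ⟨h, -⟩
    · exact vt_ne (by omega) h
    · exact vt_ne (by omega) h
  rw [hU, Set.ncard_union_eq Set.disjoint_sdiff_right (Set.toFinite _) (Set.toFinite _),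
    ncard_Ef_fa, diff_ab, Set.ncard_pair hne]
  omega

lemma nbhd0 : (Gr n).neighborSet (vt n 0) = {vt n 1, vt n 2, vt n 3} := by
  ext w
  simp only [SimpleGraph.mem_neighborSet, gr_adj, ES, Set.mem_insert_iff,
    Set.mem_singleton_iff, Set.mem_union]
  constructor
  · rintro ⟨h | h | h, hne⟩
    · rw [Sym2.eq_iff] at h
      rcases h with ⟨-, h⟩ | ⟨h, -⟩
      · exact Or.inl h
      · exact absurd h (vt_ne (by omega))
    · have := (mem_Ef_iff (fa_isPMF (n := n)).1).mp h
      rw [fa0] at this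
      exact Or.inr (Or.inl this.symm)
    · have := (mem_Ef_iff (fb_isPMF (n := n)).1).mp h
      rw [fb0] at this
      exact Or.inr (Or.inr this.symm)
  · rintro (rfl | rfl | rfl)
    · exact ⟨Or.inl rfl, (vt_ne (by omega))⟩
    · refine ⟨Or.inr (Or.inl ((mem_Ef_iff (fa_isPMF (n := n)).1).mpr fa0)), vt_ne (by omega)⟩
    · exact ⟨Or.inr (Or.inr ((mem_Ef_iff (fb_isPMF (n := n)).1).mpr fb0)), vt_ne (by omega)⟩

lemma nbhd4 : (Gr n).neighborSet (vt n 4) = {vt n 5} := by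
  ext w
  simp only [SimpleGraph.mem_neighborSet, gr_adj, ES, Set.mem_insert_iff,
    Set.mem_singleton_iff, Set.mem_union]
  constructor
  · rintro ⟨h | h | h, hne⟩
    · rw [Sym2.eq_iff] at h
      rcases h with ⟨h, -⟩ | ⟨h, -⟩
      · exact absurd h (vt_ne (by omega))
      · exact absurd h (vt_ne (by omega))
    · have := (mem_Ef_iff (fa_isPMF (n := n)).1).mp h
      rw [fa4] at this
      exact this.symm
    · have := (mem_Ef_iff (fb_isPMF (n := n)).1).mp h
      rw [fb4] at this
      exact this.symm
  · rintro rfl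
    exact ⟨Or.inr (Or.inl ((mem_Ef_iff (fa_isPMF (n := n)).1).mpr fa4)), vt_ne (by omega)⟩

lemma ncard_nbhd0 : ((Gr n).neighborSet (vt n 0)).ncard = 3 := by
  rw [nbhd0]
  rw [Set.ncard_insert_of_notMem (by
      simp only [Set.mem_insert_iff, Set.mem_singleton_iff]
      push_neg
      exact ⟨vt_ne (by omega), vt_ne (by omega)⟩) ((Set.finite_singleton _).insert _),
    Set.ncard_pair (vt_ne (by omega))]

lemma ncard_nbhd4 : ((Gr n).neighborSet (vt n 4)).ncard = 1 := by
  rw [nbhd4, Set.ncard_singleton]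

lemma two_le_perfmat : 2 ≤ perfmat (Gr n) := by
  refine (Set.one_lt_ncard_iff (Set.toFinite _)).mpr
    ⟨toSub _ _ (fa_isPMF (n := n)), toSub _ _ (fb_isPMF (n := n)), ?_, ?_, ?_⟩
  · exact toSub_isPM _ _
  · exact toSub_isPM _ _
  · exact toSub_ne _ _ fa_ne_fb

end Count

end Stmt17Aux


/-- For every `n ≥ 1` there is a graph with `6+2n` vertices and `6+n` edges that is not
almost regular but maximizes the number of perfect matchings among all graphs with
`6+2n` vertices and `6+n` edges. -/
theorem stmt_17 (n : ℕ) (hn : 1 ≤ n) :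
    ∃ G : SimpleGraph (Fin (6 + 2 * n)),
      (¬ ∀ u v, |(ndeg G u : ℤ) - (ndeg G v : ℤ)| ≤ 1) ∧
      G.edgeSet.ncard = 6 + n ∧
      ∀ H : SimpleGraph (Fin (6 + 2 * n)), H.edgeSet.ncard = 6 + n →
        perfmat H ≤ perfmat G := by
  classical
  refine ⟨Stmt17Aux.Gr n, ?_, Stmt17Aux.gr_ncard, ?_⟩
  · intro hall
    have h0 := hall (Stmt17Aux.vt n 0) (Stmt17Aux.vt n 4)
    have e0 : ndeg (Stmt17Aux.Gr n) (Stmt17Aux.vt n 0) = 3 := Stmt17Aux.ncard_nbhd0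
    have e4 : ndeg (Stmt17Aux.Gr n) (Stmt17Aux.vt n 4) = 1 := Stmt17Aux.ncard_nbhd4
    rw [e0, e4] at h0
    norm_num at h0
  · intro H hE
    exact le_trans (Stmt17Aux.perfmat_le_two (Fintype.card_fin _) H hE) Stmt17Aux.two_le_perfmat
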